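/- arXiv:1803.08761 — 3 statements merged into one kernel-verified Lean document; each statement's English description precedes it below -/
import Mathlib

section
/- Let (U_i)_{i≥1} be i.i.d. random variables with values in [0,∞], with P(U_1 = ∞) > 0, and suppose there exist constants C₁, C₂ > 0 such that P(t < U_1 < ∞) ≤ C₁ e^{−C₂ t} for all t > 0. Let L = min{i : U_i = ∞} and T = Σ_{i=1}^{L−1} U_i (with T = 0 if L = 1). Then there exists β > 0 such that E[e^{β T}] < ∞; in particular T has exponentially decaying tail probabilities. -/
open MeasureTheory ProbabilityTheory Filter
open scoped ENNReal NNReal Topology BigOperators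

section Aux

variable {Ω : Type*} [MeasurableSpace Ω] {μ : Measure Ω}

/-- Independence factorizes lintegrals of products of compositions. -/
lemma aux_lintegral_prod [IsProbabilityMeasure μ] (U : ℕ → Ω → ℝ≥0∞) (hmeas : ∀ i, Measurable (U i))
    (hindep : iIndepFun U μ)
    (f : ℕ → ℝ≥0∞ → ℝ≥0∞) (hf : ∀ i, Measurable (f i)) (n : ℕ) :
    ∫⁻ ω, ∏ i ∈ Finset.range n, f i (U i ω) ∂μ
      = ∏ i ∈ Finset.range n, ∫⁻ ω, f i (U i ω) ∂μ := by
  induction n with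
  | zero => simp
  | succ n ih =>
    have hVmeas : ∀ i, Measurable (f i ∘ U i) := fun i => (hf i).comp (hmeas i)
    have hind : IndepFun (∏ j ∈ Finset.range n, (fun i => f i ∘ U i) j)
        ((fun i => f i ∘ U i) n) μ :=
      (hindep.comp _ hf).indepFun_prod_range_succ hVmeas n
    have heqf : (∏ j ∈ Finset.range n, (fun i => f i ∘ U i) j)
        = fun ω => ∏ i ∈ Finset.range n, f i (U i ω) := by
      funext ω; rw [Finset.prod_apply]; rfl
    rw [heqf] at hind
    have key := lintegral_mul_eq_lintegral_mul_lintegral_of_indepFun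
      (f := fun ω => ∏ i ∈ Finset.range n, f i (U i ω)) (g := fun ω => f n (U n ω))
      (Finset.measurable_prod _ fun i _ => hVmeas i) (hVmeas n) hind
    simp only [Finset.prod_range_succ]
    rw [← ih]
    simpa using key

/-- The level sets of `ω ↦ sInf {i | U i ω = ⊤}` are measurable. -/
lemma aux_measurableSet_L (U : ℕ → Ω → ℝ≥0∞) (hmeas : ∀ i, Measurable (U i)) (l : ℕ) :
    MeasurableSet {ω | sInf {i | U i ω = ⊤} = l} := by
  have hm : ∀ i, MeasurableSet {ω | U i ω = ⊤} := fun i =>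
    hmeas i (measurableSet_singleton ⊤)
  cases l with
  | zero =>
    have heq : {ω | sInf {i | U i ω = ⊤} = 0}
        = {ω | U 0 ω = ⊤} ∪ ⋂ i, {ω | U i ω = ⊤}ᶜ := by
      ext ω
      simp only [Set.mem_setOf_eq, Set.mem_union, Set.mem_iInter, Set.mem_compl_iff,
        Nat.sInf_eq_zero]
      constructor
      · rintro (h | h)
        · exact Or.inl h
        · exact Or.inr fun i hi => (Set.eq_empty_iff_forall_notMem.1 h i) hi
      · rintro (h | h)
        · exact Or.inl h
        · exact Or.inr (Set.eq_empty_iff_forall_notMem.2 h)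
    rw [heq]
    exact (hm 0).union (MeasurableSet.iInter fun i => (hm i).compl)
  | succ l =>
    have heq : {ω | sInf {i | U i ω = ⊤} = l + 1}
        = {ω | U (l + 1) ω = ⊤} ∩ ⋂ i ∈ Set.Iio (l + 1), {ω | U i ω = ⊤}ᶜ := by
      ext ω
      simp only [Set.mem_setOf_eq, Set.mem_inter_iff, Set.mem_iInter, Set.mem_compl_iff,
        Set.mem_Iio]
      constructor
      · intro h
        have hne : {i | U i ω = ⊤}.Nonempty := by
          by_contra hc
          rw [Set.not_nonempty_iff_eq_empty] at hc
          rw [hc, Nat.sInf_empty] at h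
          exact (Nat.succ_ne_zero l) h.symm
        refine ⟨?_, fun i hi => Nat.notMem_of_lt_sInf (h ▸ hi)⟩
        have := Nat.sInf_mem hne
        rwa [h] at this
      · rintro ⟨h1, h2⟩
        refine le_antisymm (Nat.sInf_le h1) ?_
        by_contra hc
        push_neg at hc
        have hmem : sInf {i | U i ω = ⊤} ∈ {i | U i ω = ⊤} :=
          Nat.sInf_mem ⟨l + 1, h1⟩
        exact h2 _ hc hmem
    rw [heq]
    exact (hm (l + 1)).inter
      (MeasurableSet.biInter (Set.to_countable _) fun i _ => (hm i).compl)

/-- Pointwise layer-type bound for the exponential. -/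
lemma aux_exp_bound (β x : ℝ) (hβ : 0 ≤ β) (hx : 0 ≤ x) :
    ENNReal.ofReal (Real.exp (β * x))
      ≤ 1 + ∑' n : ℕ, if (n : ℝ) ≤ x then
          ENNReal.ofReal ((Real.exp β - 1) * Real.exp (β * n)) else 0 := by
  set N := Nat.floor x with hN
  have hxN : x ≤ (N : ℝ) + 1 := (Nat.lt_floor_add_one x).le
  have hexp1 : 0 ≤ Real.exp β - 1 := by
    have := Real.add_one_le_exp β; linarith
  have h2 : ∑ n ∈ Finset.range (N + 1),
      ((Real.exp β - 1) * Real.exp (β * n)) = Real.exp (β * ((N : ℝ) + 1)) - 1 := by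
    have htel := Finset.sum_range_sub (fun n : ℕ => Real.exp (β * n)) (N + 1)
    push_cast at htel
    simp only [mul_zero, Real.exp_zero] at htel
    rw [← htel]
    apply Finset.sum_congr rfl
    intro n _
    rw [mul_add, mul_one, Real.exp_add]
    ring
  have hge1 : (1 : ℝ) ≤ Real.exp (β * ((N : ℝ) + 1)) :=
    Real.one_le_exp (by positivity)
  calc ENNReal.ofReal (Real.exp (β * x))
      ≤ ENNReal.ofReal (Real.exp (β * ((N : ℝ) + 1))) := by
        apply ENNReal.ofReal_le_ofReal
        exact Real.exp_le_exp.2 (mul_le_mul_of_nonneg_left hxN hβ)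
    _ = 1 + ENNReal.ofReal (Real.exp (β * ((N : ℝ) + 1)) - 1) := by
        rw [← ENNReal.ofReal_one, ← ENNReal.ofReal_add (by norm_num) (by linarith)]
        congr 1; ring
    _ = 1 + ENNReal.ofReal (∑ n ∈ Finset.range (N + 1),
          ((Real.exp β - 1) * Real.exp (β * n))) := by
        rw [h2]
    _ = 1 + ∑ n ∈ Finset.range (N + 1),
          ENNReal.ofReal ((Real.exp β - 1) * Real.exp (β * n)) := by
        rw [ENNReal.ofReal_sum_of_nonneg]
        intro i _
        positivity
    _ ≤ 1 + ∑' n : ℕ, if (n : ℝ) ≤ x then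
          ENNReal.ofReal ((Real.exp β - 1) * Real.exp (β * n)) else 0 := by
        apply add_le_add_right
        have hsum : ∑ n ∈ Finset.range (N + 1),
            ENNReal.ofReal ((Real.exp β - 1) * Real.exp (β * n))
            = ∑ n ∈ Finset.range (N + 1), (if (n : ℝ) ≤ x then
              ENNReal.ofReal ((Real.exp β - 1) * Real.exp (β * n)) else 0) := by
          apply Finset.sum_congr rfl
          intro n hn
          rw [if_pos]
          rw [Finset.mem_range, Nat.lt_succ_iff] at hn
          exact (Nat.le_floor_iff hx).1 hn
        rw [hsum]
        exact ENNReal.sum_le_tsum _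

end Aux

set_option maxHeartbeats 1000000 in
/-- Restart argument: `U i` are i.i.d. `[0,∞]`-valued with `P(U = ∞) > 0` and
exponentially decaying tails on the finite part. With `L = min {i : U i = ∞}`
(zero-based, so `L` plays the role of `L - 1`) and `T = ∑_{i < L} U i`,
there is `β > 0` with `E[e^{βT}] < ∞`. -/
theorem stmt_1 {Ω : Type*} [MeasurableSpace Ω] (μ : Measure Ω) [IsProbabilityMeasure μ]
    (U : ℕ → Ω → ℝ≥0∞) (hmeas : ∀ i, Measurable (U i))
    (hindep : iIndepFun U μ)
    (hident : ∀ i, IdentDistrib (U i) (U 0) μ μ)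
    (hpos : 0 < μ {ω | U 0 ω = ⊤})
    (C₁ C₂ : ℝ) (hC₁ : 0 < C₁) (hC₂ : 0 < C₂)
    (htail : ∀ t : ℝ, 0 < t →
      μ {ω | ENNReal.ofReal t < U 0 ω ∧ U 0 ω ≠ ⊤} ≤
        ENNReal.ofReal (C₁ * Real.exp (-C₂ * t))) :
    ∃ β : ℝ, 0 < β ∧
      ∫⁻ ω, ENNReal.ofReal
        (Real.exp (β * (∑ i ∈ Finset.range (sInf {i | U i ω = ⊤}), U i ω).toReal)) ∂μ < ⊤ := by
  classical
  have hmeas_top : MeasurableSet {ω | U 0 ω = ⊤} := hmeas 0 (measurableSet_singleton ⊤)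
  set p : ℝ≥0∞ := μ {ω | U 0 ω = ⊤} with hp
  have hp1 : p ≤ 1 := prob_le_one
  have hptop : p ≠ ⊤ := (lt_of_le_of_lt hp1 ENNReal.one_lt_top).ne
  set ε : ℝ := p.toReal with hε
  have hε0 : 0 < ε := ENNReal.toReal_pos hpos.ne' hptop
  set r : ℝ := Real.exp (-(C₂ / 4)) with hr
  have hr0 : 0 < r := Real.exp_pos _
  have hr1 : r < 1 := Real.exp_lt_one_iff.2 (by linarith)
  have hr1' : 0 < 1 - r := by linarith
  set K : ℝ := 1 + C₁ * (r / (1 - r)) with hK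
  have hK0 : 0 < K := by
    rw [hK]
    have := mul_pos hC₁ (div_pos hr0 hr1')
    linarith
  set β : ℝ := min (C₂ / 4) (Real.log (1 + ε / (2 * K))) with hβdef
  have h2K : (0 : ℝ) < 2 * K := by linarith
  have hβ0 : 0 < β := by
    rw [hβdef]
    refine lt_min (by linarith) (Real.log_pos ?_)
    have := div_pos hε0 h2K
    linarith
  have hβC₂ : β ≤ C₂ / 4 := min_le_left _ _
  have hexpβ1 : 0 ≤ Real.exp β - 1 := by
    have := Real.add_one_le_exp β; linarith
  have hexpβ : (Real.exp β - 1) * K ≤ ε / 2 := by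
    have h1 : Real.exp β ≤ 1 + ε / (2 * K) := by
      calc Real.exp β ≤ Real.exp (Real.log (1 + ε / (2 * K))) :=
            Real.exp_le_exp.2 (min_le_right _ _)
        _ = 1 + ε / (2 * K) := Real.exp_log (by positivity)
    have h2 : Real.exp β - 1 ≤ ε / (2 * K) := by linarith
    calc (Real.exp β - 1) * K ≤ (ε / (2 * K)) * K :=
          mul_le_mul_of_nonneg_right h2 hK0.le
      _ = ε / 2 := by
          field_simp
  -- the two one-variable functions
  set h : ℝ≥0∞ → ℝ≥0∞ := fun x =>
    if x = ⊤ then 0 else ENNReal.ofReal (Real.exp (β * x.toReal)) with hhdef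
  set h' : ℝ≥0∞ → ℝ≥0∞ := fun x => if x = ⊤ then 1 else 0 with hh'def
  have hhm : Measurable h := by
    apply Measurable.ite (measurableSet_singleton ⊤) measurable_const
    exact ENNReal.measurable_ofReal.comp
      (Real.measurable_exp.comp (measurable_const.mul ENNReal.measurable_toReal))
  have hh'm : Measurable h' :=
    Measurable.ite (measurableSet_singleton ⊤) measurable_const measurable_const
  set m : ℝ≥0∞ := ∫⁻ ω, h (U 0 ω) ∂μ with hmdef
  -- tail events
  set E : ℕ → Set Ω := fun n => {ω | U 0 ω ≠ ⊤ ∧ (n : ℝ) ≤ (U 0 ω).toReal} with hE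
  have hEmeas : ∀ n, MeasurableSet (E n) := fun n =>
    hmeas_top.compl.inter
      (measurableSet_le measurable_const (ENNReal.measurable_toReal.comp (hmeas 0)))
  set c : ℕ → ℝ≥0∞ := fun n => ENNReal.ofReal ((Real.exp β - 1) * Real.exp (β * n)) with hc
  -- pointwise bound for h ∘ U 0
  have hpt : ∀ ω, h (U 0 ω) ≤ (E 0).indicator (fun _ => 1) ω
      + ∑' n : ℕ, (E n).indicator (fun _ => c n) ω := by
    intro ω
    by_cases hω : U 0 ω = ⊤
    · simp only [hhdef, hω, if_pos rfl]
      exact zero_le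
    · have hmem0 : ω ∈ E 0 := ⟨hω, by simp [ENNReal.toReal_nonneg]⟩
      have hind : ∀ n : ℕ, (E n).indicator (fun _ => c n) ω
          = if (n : ℝ) ≤ (U 0 ω).toReal then c n else 0 := by
        intro n
        rw [Set.indicator_apply]
        by_cases hn : (n : ℝ) ≤ (U 0 ω).toReal
        · rw [if_pos ⟨hω, hn⟩, if_pos hn]
        · rw [if_neg (fun hc' => hn hc'.2), if_neg hn]
      calc h (U 0 ω) = ENNReal.ofReal (Real.exp (β * (U 0 ω).toReal)) := by
            simp only [hhdef, if_neg hω]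
        _ ≤ 1 + ∑' n : ℕ, if (n : ℝ) ≤ (U 0 ω).toReal then c n else 0 :=
            aux_exp_bound β _ hβ0.le ENNReal.toReal_nonneg
        _ = (E 0).indicator (fun _ => 1) ω + ∑' n : ℕ, (E n).indicator (fun _ => c n) ω := by
            rw [Set.indicator_of_mem hmem0]
            congr 1
            exact (tsum_congr hind).symm
  -- integrate the pointwise bound
  have hm_le : m ≤ μ (E 0) + ∑' n : ℕ, c n * μ (E n) := by
    calc m ≤ ∫⁻ ω, ((E 0).indicator (fun _ => 1) ω
          + ∑' n : ℕ, (E n).indicator (fun _ => c n) ω) ∂μ := lintegral_mono hpt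
      _ = ∫⁻ ω, (E 0).indicator (fun _ => 1) ω ∂μ
          + ∫⁻ ω, ∑' n : ℕ, (E n).indicator (fun _ => c n) ω ∂μ :=
          lintegral_add_left (measurable_const.indicator (hEmeas 0)) _
      _ = μ (E 0) + ∑' n : ℕ, c n * μ (E n) := by
          rw [lintegral_indicator_const (hEmeas 0), one_mul,
            lintegral_tsum fun n => (measurable_const.indicator (hEmeas n)).aemeasurable]
          congr 1
          exact tsum_congr fun n => lintegral_indicator_const (hEmeas n) (c n)
  -- bound the individual pieces
  have hE0 : μ (E 0) ≤ 1 - p := by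
    have hsub : E 0 ⊆ {ω | U 0 ω = ⊤}ᶜ := fun ω hω => hω.1
    calc μ (E 0) ≤ μ {ω | U 0 ω = ⊤}ᶜ := measure_mono hsub
      _ = 1 - p := prob_compl_eq_one_sub hmeas_top
  have hEn : ∀ n : ℕ, μ (E (n + 1))
      ≤ ENNReal.ofReal (C₁ * Real.exp (-C₂ * (((n : ℝ) + 1) - 1 / 2))) := by
    intro n
    have ht : (0 : ℝ) < ((n : ℝ) + 1) - 1 / 2 := by
      have : (0 : ℝ) ≤ (n : ℝ) := Nat.cast_nonneg n
      linarith
    refine le_trans (measure_mono ?_) (htail _ ht)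
    intro ω hω
    obtain ⟨hne, hle⟩ := hω
    refine ⟨?_, hne⟩
    have h1 : ENNReal.ofReal (((n : ℝ) + 1) - 1 / 2)
        < ENNReal.ofReal (((n : ℝ) + 1)) := by
      rw [ENNReal.ofReal_lt_ofReal_iff (by positivity)]
      linarith
    have h2 : ENNReal.ofReal (((n : ℝ) + 1)) ≤ U 0 ω := by
      rw [← ENNReal.ofReal_toReal hne]
      apply ENNReal.ofReal_le_ofReal
      exact_mod_cast hle
    exact lt_of_lt_of_le h1 h2
  -- the geometric series bound
  have hreal_term : ∀ n : ℕ,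
      (Real.exp β - 1) * Real.exp (β * ((n : ℝ) + 1))
        * (C₁ * Real.exp (-C₂ * (((n : ℝ) + 1) - 1 / 2)))
      ≤ (Real.exp β - 1) * C₁ * r * r ^ n := by
    intro n
    have hrn : r ^ (n + 1) = Real.exp (-(C₂ / 4) * ((n : ℝ) + 1)) := by
      rw [hr, ← Real.exp_nat_mul]
      congr 1
      push_cast
      ring
    have hexple : Real.exp (β * ((n : ℝ) + 1)) * Real.exp (-C₂ * (((n : ℝ) + 1) - 1 / 2))
        ≤ r ^ (n + 1) := by
      rw [← Real.exp_add, hrn]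
      apply Real.exp_le_exp.2
      have hn0 : (0 : ℝ) ≤ (n : ℝ) := Nat.cast_nonneg n
      nlinarith [mul_le_mul_of_nonneg_right hβC₂ (by linarith : (0:ℝ) ≤ (n : ℝ) + 1)]
    calc (Real.exp β - 1) * Real.exp (β * ((n : ℝ) + 1))
          * (C₁ * Real.exp (-C₂ * (((n : ℝ) + 1) - 1 / 2)))
        = ((Real.exp β - 1) * C₁)
          * (Real.exp (β * ((n : ℝ) + 1)) * Real.exp (-C₂ * (((n : ℝ) + 1) - 1 / 2))) := by
          ring
      _ ≤ ((Real.exp β - 1) * C₁) * r ^ (n + 1) :=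
          mul_le_mul_of_nonneg_left hexple (by positivity)
      _ = (Real.exp β - 1) * C₁ * r * r ^ n := by rw [pow_succ]; ring
  have hsum_tail : ∑' n : ℕ, c (n + 1)
        * ENNReal.ofReal (C₁ * Real.exp (-C₂ * (((n : ℝ) + 1) - 1 / 2)))
      ≤ ENNReal.ofReal ((Real.exp β - 1) * C₁ * (r / (1 - r))) := by
    have hterm : ∀ n : ℕ, c (n + 1)
        * ENNReal.ofReal (C₁ * Real.exp (-C₂ * (((n : ℝ) + 1) - 1 / 2)))
        ≤ ENNReal.ofReal ((Real.exp β - 1) * C₁ * r * r ^ n) := by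
      intro n
      rw [hc]
      simp only
      rw [← ENNReal.ofReal_mul (by positivity)]
      apply ENNReal.ofReal_le_ofReal
      have := hreal_term n
      push_cast
      push_cast at this
      nlinarith [this]
    calc ∑' n : ℕ, c (n + 1)
          * ENNReal.ofReal (C₁ * Real.exp (-C₂ * (((n : ℝ) + 1) - 1 / 2)))
        ≤ ∑' n : ℕ, ENNReal.ofReal ((Real.exp β - 1) * C₁ * r * r ^ n) :=
          ENNReal.tsum_le_tsum hterm
      _ = ENNReal.ofReal (∑' n : ℕ, (Real.exp β - 1) * C₁ * r * r ^ n) := by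
          rw [ENNReal.ofReal_tsum_of_nonneg (fun n => by positivity)]
          exact (summable_geometric_of_lt_one hr0.le hr1).mul_left _
      _ = ENNReal.ofReal ((Real.exp β - 1) * C₁ * (r / (1 - r))) := by
          rw [tsum_mul_left, tsum_geometric_of_lt_one hr0.le hr1]
          congr 1
          field_simp
  -- putting the bound on m together
  have hm_lt : m < 1 := by
    have hc0 : c 0 = ENNReal.ofReal (Real.exp β - 1) := by
      simp [hc]
    have hsplit : ∑' n : ℕ, c n * μ (E n)
        = c 0 * μ (E 0) + ∑' n : ℕ, c (n + 1) * μ (E (n + 1)) :=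
      tsum_eq_zero_add' ENNReal.summable
    have hstep : ∑' n : ℕ, c n * μ (E n) ≤ ENNReal.ofReal ((Real.exp β - 1) * K) := by
      rw [hsplit]
      have h0 : c 0 * μ (E 0) ≤ ENNReal.ofReal (Real.exp β - 1) := by
        rw [hc0]
        calc ENNReal.ofReal (Real.exp β - 1) * μ (E 0)
            ≤ ENNReal.ofReal (Real.exp β - 1) * 1 :=
              mul_le_mul_right prob_le_one _
          _ = ENNReal.ofReal (Real.exp β - 1) := mul_one _
      have h1 : ∑' n : ℕ, c (n + 1) * μ (E (n + 1))
          ≤ ENNReal.ofReal ((Real.exp β - 1) * C₁ * (r / (1 - r))) := by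
        refine le_trans (ENNReal.tsum_le_tsum fun n => ?_) hsum_tail
        exact mul_le_mul_right (hEn n) _
      calc c 0 * μ (E 0) + ∑' n : ℕ, c (n + 1) * μ (E (n + 1))
          ≤ ENNReal.ofReal (Real.exp β - 1)
            + ENNReal.ofReal ((Real.exp β - 1) * C₁ * (r / (1 - r))) := add_le_add h0 h1
        _ = ENNReal.ofReal ((Real.exp β - 1) * K) := by
            rw [← ENNReal.ofReal_add hexpβ1 (by positivity)]
            congr 1
            rw [hK]
            ring
    have hfinal : m ≤ (1 - p) + ENNReal.ofReal (ε / 2) := by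
      refine le_trans hm_le ?_
      refine add_le_add (le_trans hE0 le_rfl) ?_
      refine le_trans hstep ?_
      exact ENNReal.ofReal_le_ofReal hexpβ
    have hlt : ENNReal.ofReal (ε / 2) < p := by
      have : ENNReal.ofReal (ε / 2) < ENNReal.ofReal ε :=
        (ENNReal.ofReal_lt_ofReal_iff hε0).2 (by linarith)
      rwa [hε, ENNReal.ofReal_toReal hptop] at this
    calc m ≤ (1 - p) + ENNReal.ofReal (ε / 2) := hfinal
      _ < (1 - p) + p := ENNReal.add_lt_add_left
          (by
            have : (1 : ℝ≥0∞) - p ≤ 1 := tsub_le_self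
            exact (lt_of_le_of_lt this ENNReal.one_lt_top).ne) hlt
      _ = 1 := tsub_add_cancel_of_le hp1
  have hm_top : m ≠ ⊤ := (hm_lt.trans ENNReal.one_lt_top).ne
  -- identically distributed integrals
  have hint_h : ∀ i, ∫⁻ ω, h (U i ω) ∂μ = m := by
    intro i
    rw [hmdef]
    rw [← lintegral_map hhm (hmeas i), (hident i).map_eq, lintegral_map hhm (hmeas 0)]
  have hint_h' : ∀ i, ∫⁻ ω, h' (U i ω) ∂μ = p := by
    intro i
    rw [← lintegral_map hh'm (hmeas i), (hident i).map_eq, lintegral_map hh'm (hmeas 0)]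
    have heq : ∀ ω, h' (U 0 ω) = {ω | U 0 ω = ⊤}.indicator (fun _ => (1 : ℝ≥0∞)) ω := by
      intro ω
      rw [Set.indicator_apply]
      rfl
    rw [lintegral_congr heq, lintegral_indicator_const hmeas_top, one_mul]
  -- the decomposition over the value of L
  set L : Ω → ℕ := fun ω => sInf {i | U i ω = ⊤} with hL
  set G : ℕ → Ω → ℝ≥0∞ := fun l ω =>
    if L ω = l then ENNReal.ofReal (Real.exp (β * (∑ i ∈ Finset.range l, U i ω).toReal))
    else 0 with hG
  have hGmeas : ∀ l, Measurable (G l) := by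
    intro l
    apply Measurable.ite (aux_measurableSet_L U hmeas l) _ measurable_const
    apply ENNReal.measurable_ofReal.comp
    apply Real.measurable_exp.comp
    apply measurable_const.mul
    exact ENNReal.measurable_toReal.comp (Finset.measurable_sum _ fun i _ => hmeas i)
  have hFG : ∀ ω, ENNReal.ofReal
      (Real.exp (β * (∑ i ∈ Finset.range (sInf {i | U i ω = ⊤}), U i ω).toReal))
      = ∑' l, G l ω := by
    intro ω
    have h1 : ∑' l, G l ω = G (L ω) ω :=
      tsum_eq_single _ fun l hl => if_neg fun hc' => hl hc'.symm
    rw [h1, hG]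
    exact (if_pos rfl).symm
  -- bound for G 0
  have hG0 : ∫⁻ ω, G 0 ω ∂μ ≤ 1 := by
    have hle : ∀ ω, G 0 ω ≤ 1 := by
      intro ω
      rw [hG]
      simp only
      split
      · simp
      · exact zero_le
    calc ∫⁻ ω, G 0 ω ∂μ ≤ ∫⁻ _, (1 : ℝ≥0∞) ∂μ := lintegral_mono hle
      _ = 1 := by simp
  -- bound for G (l+1)
  have hGl : ∀ l : ℕ, ∫⁻ ω, G (l + 1) ω ∂μ ≤ m ^ (l + 1) * p := by
    intro l
    set f : ℕ → ℝ≥0∞ → ℝ≥0∞ := fun i => if i = l + 1 then h' else h with hf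
    have hfm : ∀ i, Measurable (f i) := by
      intro i
      rw [hf]
      dsimp only
      split
      · exact hh'm
      · exact hhm
    have hptG : ∀ ω, G (l + 1) ω ≤ ∏ i ∈ Finset.range (l + 2), f i (U i ω) := by
      intro ω
      rw [hG]
      simp only
      split
      case isTrue hω =>
        have hne : {i | U i ω = ⊤}.Nonempty := by
          by_contra hcon
          rw [Set.not_nonempty_iff_eq_empty] at hcon
          have : L ω = 0 := by
            rw [hL]
            simp only [hcon, Nat.sInf_empty]
          omega
        have htop : U (l + 1) ω = ⊤ := by
          have := Nat.sInf_mem hne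
          have hLω : sInf {i | U i ω = ⊤} = l + 1 := hω
          rwa [hLω] at this
        have hfin : ∀ i, i < l + 1 → U i ω ≠ ⊤ := by
          intro i hi
          have hLω : sInf {j | U j ω = ⊤} = l + 1 := hω
          have hnm : i ∉ {j | U j ω = ⊤} := Nat.notMem_of_lt_sInf (by omega)
          exact hnm
        have hprod : ∏ i ∈ Finset.range (l + 2), f i (U i ω)
            = ∏ i ∈ Finset.range (l + 1), ENNReal.ofReal (Real.exp (β * (U i ω).toReal)) := by
          rw [Finset.prod_range_succ]
          have hlast : f (l + 1) (U (l + 1) ω) = 1 := by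
            simp [hf, hh'def, htop]
          rw [hlast, mul_one]
          apply Finset.prod_congr rfl
          intro i hi
          rw [Finset.mem_range] at hi
          rw [hf]
          simp only [if_neg (by omega : ¬ i = l + 1), hhdef, if_neg (hfin i hi)]
        rw [hprod]
        apply le_of_eq
        rw [← ENNReal.ofReal_prod_of_nonneg fun i _ => (Real.exp_pos _).le]
        congr 1
        rw [← Real.exp_sum]
        congr 1
        rw [ENNReal.toReal_sum fun i hi => hfin i (Finset.mem_range.1 hi),
          Finset.mul_sum]
      case isFalse hω =>
        exact zero_le
    calc ∫⁻ ω, G (l + 1) ω ∂μ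
        ≤ ∫⁻ ω, ∏ i ∈ Finset.range (l + 2), f i (U i ω) ∂μ := lintegral_mono hptG
      _ = ∏ i ∈ Finset.range (l + 2), ∫⁻ ω, f i (U i ω) ∂μ :=
          aux_lintegral_prod U hmeas hindep f hfm (l + 2)
      _ = m ^ (l + 1) * p := by
          rw [Finset.prod_range_succ]
          have h1 : ∫⁻ ω, f (l + 1) (U (l + 1) ω) ∂μ = p := by
            rw [hf]; simp only [if_pos rfl]; exact hint_h' (l + 1)
          have h2 : ∏ i ∈ Finset.range (l + 1), ∫⁻ ω, f i (U i ω) ∂μ = m ^ (l + 1) := by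
            rw [Finset.prod_congr rfl fun i hi => ?_]
            · rw [Finset.prod_const, Finset.card_range]
            · rw [Finset.mem_range] at hi
              rw [hf]
              simp only [if_neg (by omega : ¬ i = l + 1)]
              exact hint_h i
          rw [h1, h2]
  -- finish
  refine ⟨β, hβ0, ?_⟩
  calc ∫⁻ ω, ENNReal.ofReal
        (Real.exp (β * (∑ i ∈ Finset.range (sInf {i | U i ω = ⊤}), U i ω).toReal)) ∂μ
      = ∑' l : ℕ, ∫⁻ ω, G l ω ∂μ := by
        rw [← lintegral_tsum fun l => (hGmeas l).aemeasurable]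
        exact lintegral_congr hFG
    _ = ∫⁻ ω, G 0 ω ∂μ + ∑' l : ℕ, ∫⁻ ω, G (l + 1) ω ∂μ :=
        tsum_eq_zero_add' ENNReal.summable
    _ ≤ 1 + ∑' l : ℕ, m ^ (l + 1) * p :=
        add_le_add hG0 (ENNReal.tsum_le_tsum hGl)
    _ ≤ 1 + ∑' l : ℕ, m ^ l := by
        apply add_le_add_right
        apply ENNReal.tsum_le_tsum
        intro l
        calc m ^ (l + 1) * p ≤ m ^ (l + 1) * 1 := mul_le_mul_right hp1 _
          _ = m ^ l * m := by rw [mul_one, pow_succ]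
          _ ≤ m ^ l * 1 := mul_le_mul_right hm_lt.le _
          _ = m ^ l := mul_one _
    _ < ⊤ := by
        rw [ENNReal.tsum_geometric]
        apply ENNReal.add_lt_top.2
        constructor
        · exact ENNReal.one_lt_top
        · rw [ENNReal.inv_lt_top]
          exact tsub_pos_of_lt hm_lt
end

section
/- Let (ξ_n)_{n≥1} be square-integrable real random variables with E[ξ_n] = 0 for all n, Var[ξ_i] ≤ c, and |Cov[ξ_j, ξ_k]| ≤ C Φ(k − j) for j < k, where Φ : ℕ → [0,∞) is decreasing and summable. Set S_n = Σ_{i=1}^n ξ_i. Then S_n / n → 0 almost surely as n → ∞. -/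
open MeasureTheory ProbabilityTheory Filter
open scoped ENNReal NNReal Topology BigOperators

/-- If nonnegative integrable functions have summable integrals, then they tend to `0`
almost everywhere. -/
lemma aux_ae_tendsto_zero {Ω : Type*} [MeasurableSpace Ω] (μ : Measure Ω)
    (f : ℕ → Ω → ℝ) (hnn : ∀ n ω, 0 ≤ f n ω) (hint : ∀ n, Integrable (f n) μ)
    (hsum : Summable fun n => ∫ ω, f n ω ∂μ) :
    ∀ᵐ ω ∂μ, Tendsto (fun n => f n ω) atTop (𝓝 0) := by
  have hmeas : ∀ n, AEMeasurable (fun ω => ENNReal.ofReal (f n ω)) μ :=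
    fun n => (hint n).aemeasurable.ennreal_ofReal
  have hlin : ∫⁻ ω, ∑' n, ENNReal.ofReal (f n ω) ∂μ ≠ ⊤ := by
    rw [lintegral_tsum hmeas]
    have h1 : ∀ n, ∫⁻ ω, ENNReal.ofReal (f n ω) ∂μ = ENNReal.ofReal (∫ ω, f n ω ∂μ) := fun n =>
      (ofReal_integral_eq_lintegral_ofReal (hint n) (Filter.Eventually.of_forall (hnn n))).symm
    simp_rw [h1]
    rw [← ENNReal.ofReal_tsum_of_nonneg (fun n => integral_nonneg (hnn n ·)) hsum]
    exact ENNReal.ofReal_ne_top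
  filter_upwards [ae_lt_top' (AEMeasurable.ennreal_tsum hmeas) hlin] with ω hω
  have h0 : Tendsto (fun n => ENNReal.ofReal (f n ω)) atTop (𝓝 0) :=
    ENNReal.tendsto_atTop_zero_of_tsum_ne_top hω.ne
  have h2 : Tendsto (fun n => (ENNReal.ofReal (f n ω)).toReal) atTop (𝓝 0) := by
    simpa [Function.comp_def] using (ENNReal.tendsto_toReal ENNReal.zero_ne_top).comp h0
  exact h2.congr fun n => ENNReal.toReal_ofReal (hnn n ω)

/-- Strong law of large numbers under covariance decay: centered square-integrable
variables with `Var[ξ i] ≤ c` and `|Cov[ξ j, ξ k]| ≤ C Φ(k - j)` for a decreasing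
summable `Φ` satisfy `S n / n → 0` almost surely. -/
theorem stmt_4 {Ω : Type*} [MeasurableSpace Ω] (μ : Measure Ω) [IsProbabilityMeasure μ]
    (ξ : ℕ → Ω → ℝ) (hξ : ∀ i, MemLp (ξ i) 2 μ)
    (hcent : ∀ i, ∫ ω, ξ i ω ∂μ = 0)
    (c : ℝ) (hvar : ∀ i, variance (ξ i) μ ≤ c)
    (C : ℝ) (hC : 0 < C) (Φ : ℕ → ℝ) (hΦ0 : ∀ n, 0 ≤ Φ n)
    (hΦmono : Antitone Φ) (hΦsum : Summable Φ)
    (hcov : ∀ j k : ℕ, j < k → |∫ ω, ξ j ω * ξ k ω ∂μ| ≤ C * Φ (k - j)) :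
    ∀ᵐ ω ∂μ, Tendsto (fun n : ℕ => (∑ i ∈ Finset.range n, ξ i ω) / n) atTop (𝓝 0) := by
  set S : ℕ → Ω → ℝ := fun n ω => ∑ i ∈ Finset.range n, ξ i ω with hS
  set T : ℝ := ∑' n, Φ n with hTdef
  set K : ℝ := c + 2 * C * T with hKdef
  have hT0 : 0 ≤ T := tsum_nonneg hΦ0
  have hc0 : 0 ≤ c := (variance_nonneg (ξ 0) μ).trans (hvar 0)
  have hK0 : 0 ≤ K := by
    have : 0 ≤ 2 * C * T := by positivity
    linarith
  -- integrability of products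
  have hprod : ∀ i j, Integrable (fun ω => ξ i ω * ξ j ω) μ := by
    intro i j
    have h : MemLp (ξ i • ξ j) 1 μ :=
      (hξ j).smul (hξ i)
        (hpqr := ⟨by rw [ENNReal.inv_two_add_inv_two, inv_one]⟩)
    exact memLp_one_iff_integrable.mp h
  -- second moment bound
  have hsq : ∀ i, ∫ ω, ξ i ω ^ 2 ∂μ ≤ c := by
    intro i
    have hv := variance_eq_sub (hξ i)
    rw [hcent i] at hv
    simp only [Pi.pow_apply] at hv
    have : ∫ ω, ξ i ω ^ 2 ∂μ = variance (ξ i) μ := by rw [hv]; ring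
    rw [this]; exact hvar i
  -- tail sums of Φ bounded by T
  have hshift : ∀ N : ℕ, ∑ d ∈ Finset.range N, Φ (d + 1) ≤ T := by
    intro N
    have h1 : ∑ d ∈ Finset.range N, Φ (d + 1) = ∑ d ∈ Finset.Ico 1 (N + 1), Φ d := by
      rw [Finset.sum_Ico_eq_sum_range]
      simp [add_comm]
    rw [h1]
    exact Summable.sum_le_tsum _ (fun i _ => hΦ0 i) hΦsum
  -- key variance bound for block sums
  have key : ∀ m n : ℕ, m ≤ n →
      ∫ ω, (∑ i ∈ Finset.Ico m n, ξ i ω) ^ 2 ∂μ ≤ K * ((n : ℝ) - m) := by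
    intro m n hmn
    have hexpand : ∫ ω, (∑ i ∈ Finset.Ico m n, ξ i ω) ^ 2 ∂μ
        = ∑ i ∈ Finset.Ico m n, ∑ j ∈ Finset.Ico m n, ∫ ω, ξ i ω * ξ j ω ∂μ := by
      have hptw : ∀ ω, (∑ i ∈ Finset.Ico m n, ξ i ω) ^ 2
          = ∑ i ∈ Finset.Ico m n, ∑ j ∈ Finset.Ico m n, ξ i ω * ξ j ω := by
        intro ω; rw [sq, Finset.sum_mul_sum]
      simp_rw [hptw]
      rw [integral_finset_sum _ (fun i _ => integrable_finset_sum _ (fun j _ => hprod i j))]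
      exact Finset.sum_congr rfl fun i _ => integral_finset_sum _ (fun j _ => hprod i j)
    rw [hexpand]
    have hrow : ∀ i ∈ Finset.Ico m n,
        ∑ j ∈ Finset.Ico m n, ∫ ω, ξ i ω * ξ j ω ∂μ ≤ K := by
      intro i hi
      obtain ⟨him, hin⟩ := Finset.mem_Ico.mp hi
      have hsplit : ∑ j ∈ Finset.Ico m n, (∫ ω, ξ i ω * ξ j ω ∂μ)
          = ∑ j ∈ Finset.Ico m i, (∫ ω, ξ i ω * ξ j ω ∂μ)
            + ((∫ ω, ξ i ω * ξ i ω ∂μ)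
              + ∑ j ∈ Finset.Ico (i + 1) n, (∫ ω, ξ i ω * ξ j ω ∂μ)) := by
        rw [← Finset.sum_Ico_consecutive _ him (le_of_lt hin),
          Finset.sum_eq_sum_Ico_succ_bot hin]
      rw [hsplit]
      have h1 : ∑ j ∈ Finset.Ico m i, (∫ ω, ξ i ω * ξ j ω ∂μ) ≤ C * T := by
        calc ∑ j ∈ Finset.Ico m i, (∫ ω, ξ i ω * ξ j ω ∂μ)
            ≤ ∑ j ∈ Finset.Ico m i, C * Φ (i - j) := by
              refine Finset.sum_le_sum fun j hj => ?_
              obtain ⟨hjm, hji⟩ := Finset.mem_Ico.mp hj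
              have hcomm : (∫ ω, ξ i ω * ξ j ω ∂μ) = ∫ ω, ξ j ω * ξ i ω ∂μ := by
                simp_rw [mul_comm]
              rw [hcomm]
              exact (le_abs_self _).trans (hcov j i hji)
          _ = C * ∑ j ∈ Finset.Ico m i, Φ (i - j) := by rw [Finset.mul_sum]
          _ ≤ C * T := by
              refine mul_le_mul_of_nonneg_left ?_ hC.le
              rw [Finset.sum_Ico_eq_sum_range]
              have hb : ∀ k ∈ Finset.range (i - m), Φ (i - (m + k)) = Φ ((i - m - 1 - k) + 1) := by
                intro k hk
                have hk' := Finset.mem_range.mp hk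
                congr 1
                omega
              rw [Finset.sum_congr rfl hb, Finset.sum_range_reflect (fun k => Φ (k + 1))]
              exact hshift _
      have h2 : ∑ j ∈ Finset.Ico (i + 1) n, (∫ ω, ξ i ω * ξ j ω ∂μ) ≤ C * T := by
        calc ∑ j ∈ Finset.Ico (i + 1) n, (∫ ω, ξ i ω * ξ j ω ∂μ)
            ≤ ∑ j ∈ Finset.Ico (i + 1) n, C * Φ (j - i) := by
              refine Finset.sum_le_sum fun j hj => ?_
              obtain ⟨hji, hjn⟩ := Finset.mem_Ico.mp hj
              exact (le_abs_self _).trans (hcov i j hji)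
          _ = C * ∑ j ∈ Finset.Ico (i + 1) n, Φ (j - i) := by rw [Finset.mul_sum]
          _ ≤ C * T := by
              refine mul_le_mul_of_nonneg_left ?_ hC.le
              rw [Finset.sum_Ico_eq_sum_range]
              have hb : ∀ k ∈ Finset.range (n - (i + 1)), Φ (i + 1 + k - i) = Φ (k + 1) := by
                intro k _
                congr 1
                omega
              rw [Finset.sum_congr rfl hb]
              exact hshift _
      have h3 : (∫ ω, ξ i ω * ξ i ω ∂μ) ≤ c := by
        have heq : (∫ ω, ξ i ω * ξ i ω ∂μ) = ∫ ω, ξ i ω ^ 2 ∂μ := by simp_rw [sq]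
        rw [heq]; exact hsq i
      have := add_le_add h1 (add_le_add h3 h2)
      calc ∑ j ∈ Finset.Ico m i, (∫ ω, ξ i ω * ξ j ω ∂μ)
            + ((∫ ω, ξ i ω * ξ i ω ∂μ)
              + ∑ j ∈ Finset.Ico (i + 1) n, (∫ ω, ξ i ω * ξ j ω ∂μ))
          ≤ C * T + (c + C * T) := this
        _ = K := by rw [hKdef]; ring
    calc ∑ i ∈ Finset.Ico m n, ∑ j ∈ Finset.Ico m n, ∫ ω, ξ i ω * ξ j ω ∂μ
        ≤ ∑ _i ∈ Finset.Ico m n, K := Finset.sum_le_sum hrow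
      _ = ((Finset.Ico m n).card : ℝ) * K := by rw [Finset.sum_const, nsmul_eq_mul]
      _ = K * ((n : ℝ) - m) := by
          rw [Nat.card_Ico, Nat.cast_sub hmn]; ring
  -- membership of partial sums in L²
  have hSmem : ∀ n, MemLp (S n) 2 μ := fun n =>
    memLp_finset_sum _ (fun i _ => hξ i)
  have hdiff_eq : ∀ m n : ℕ, m ≤ n → ∀ ω, S n ω - S m ω = ∑ i ∈ Finset.Ico m n, ξ i ω := by
    intro m n hmn ω
    rw [hS]
    exact (Finset.sum_Ico_eq_sub _ hmn).symm
  -- the two auxiliary sequences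
  set g : ℕ → Ω → ℝ := fun m ω => (S (m ^ 2) ω / ((m ^ 2 : ℕ) : ℝ)) ^ 2 with hgdef
  set h : ℕ → Ω → ℝ :=
    fun n ω => ((S n ω - S ((Nat.sqrt n) ^ 2) ω) / (((Nat.sqrt n) ^ 2 : ℕ) : ℝ)) ^ 2 with hhdef
  have hg_int : ∀ m, Integrable (g m) μ := by
    intro m
    rw [hgdef]
    simp_rw [div_pow]
    exact ((hSmem (m ^ 2)).integrable_sq).div_const _
  have hh_int : ∀ n, Integrable (h n) μ := by
    intro n
    have hmem : MemLp (fun ω => S n ω - S ((Nat.sqrt n) ^ 2) ω) 2 μ :=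
      (hSmem n).sub (hSmem _)
    rw [hhdef]
    simp_rw [div_pow]
    exact (hmem.integrable_sq).div_const _
  -- integral bounds
  have hg_le : ∀ m : ℕ, ∫ ω, g m ω ∂μ ≤ K * (1 / (m : ℝ) ^ 2) := by
    intro m
    rcases Nat.eq_zero_or_pos m with hm | hm
    · subst hm
      have hg0 : ∀ ω, g 0 ω = 0 := by
        intro ω
        rw [hgdef]
        norm_num
      simp_rw [hg0]
      simp
    · have hm2 : (0 : ℝ) < ((m ^ 2 : ℕ) : ℝ) := by positivity
      have heq : ∫ ω, g m ω ∂μ = (∫ ω, (S (m ^ 2) ω) ^ 2 ∂μ) / (((m ^ 2 : ℕ) : ℝ)) ^ 2 := by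
        rw [hgdef]
        simp_rw [div_pow]
        rw [integral_div]
      rw [heq]
      have hkey : ∫ ω, (S (m ^ 2) ω) ^ 2 ∂μ ≤ K * ((m : ℝ) ^ 2) := by
        have := key 0 (m ^ 2) (Nat.zero_le _)
        have heq2 : ∀ ω, (∑ i ∈ Finset.Ico 0 (m ^ 2), ξ i ω) = S (m ^ 2) ω := by
          intro ω
          rw [hS]
          simp only [Finset.range_eq_Ico]
        simp_rw [heq2] at this
        push_cast at this ⊢
        linarith
      have hcast : (((m ^ 2 : ℕ) : ℝ)) = (m : ℝ) ^ 2 := by push_cast; ring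
      rw [hcast]
      rw [div_le_iff₀ (by positivity)]
      have hmr : (0 : ℝ) < (m : ℝ) := by exact_mod_cast hm
      have hm0 : (m : ℝ) ≠ 0 := ne_of_gt hmr
      calc ∫ ω, (S (m ^ 2) ω) ^ 2 ∂μ ≤ K * ((m : ℝ) ^ 2) := hkey
        _ = K * (1 / (m : ℝ) ^ 2) * ((m : ℝ) ^ 2) ^ 2 := by
            field_simp
  have hh_le : ∀ n : ℕ, ∫ ω, h n ω ∂μ ≤ (16 * K) * (1 / (n : ℝ) ^ ((3 : ℝ) / 2)) := by
    intro n
    rcases Nat.eq_zero_or_pos n with hn | hn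
    · subst hn
      have hh0 : ∀ ω, h 0 ω = 0 := by
        intro ω
        rw [hhdef]
        norm_num
      simp_rw [hh0]
      rw [integral_zero]
      have : ((0 : ℕ) : ℝ) ^ ((3 : ℝ) / 2) = 0 := by
        rw [Nat.cast_zero]
        exact Real.zero_rpow (by norm_num)
      rw [this]
      simp
    · set s : ℕ := Nat.sqrt n with hsdef
      have hs1 : 1 ≤ s := by
        rw [hsdef]; exact Nat.sqrt_pos.mpr hn
      have hqn : s ^ 2 ≤ n := Nat.sqrt_le' n
      have hub : n ≤ 3 * s ^ 2 := by
        have h1 : n < (s + 1) ^ 2 := Nat.lt_succ_sqrt' n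
        nlinarith
      have hnsub : (n : ℝ) - (s ^ 2 : ℕ) ≤ 2 * s := by
        have h1 : n < (s + 1) ^ 2 := Nat.lt_succ_sqrt' n
        have h2 : n ≤ s ^ 2 + 2 * s := by nlinarith
        have h2' : (n : ℝ) ≤ (s : ℝ) ^ 2 + 2 * s := by exact_mod_cast h2
        push_cast
        linarith
      have hsr : (1 : ℝ) ≤ (s : ℝ) := by exact_mod_cast hs1
      have heq : ∫ ω, h n ω ∂μ
          = (∫ ω, (S n ω - S (s ^ 2) ω) ^ 2 ∂μ) / (((s ^ 2 : ℕ) : ℝ)) ^ 2 := by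
        rw [hhdef]
        simp_rw [div_pow]
        rw [integral_div]
      rw [heq]
      have hkey : ∫ ω, (S n ω - S (s ^ 2) ω) ^ 2 ∂μ ≤ K * ((n : ℝ) - (s ^ 2 : ℕ)) := by
        have := key (s ^ 2) n hqn
        have heq2 : ∀ ω, (∑ i ∈ Finset.Ico (s ^ 2) n, ξ i ω) = S n ω - S (s ^ 2) ω :=
          fun ω => (hdiff_eq _ _ hqn ω).symm
        simp_rw [heq2] at this
        exact this
      have hcast : (((s ^ 2 : ℕ) : ℝ)) = (s : ℝ) ^ 2 := by push_cast; ring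
      rw [hcast]
      have hnpos : (0 : ℝ) < (n : ℝ) := by exact_mod_cast hn
      have hrpow_pos : (0 : ℝ) < (n : ℝ) ^ ((3 : ℝ) / 2) := Real.rpow_pos_of_pos hnpos _
      have hrpow_le : (n : ℝ) ^ ((3 : ℝ) / 2) ≤ 8 * (s : ℝ) ^ 3 := by
        have h4 : (n : ℝ) ≤ 4 * (s : ℝ) ^ 2 := by
          have : (n : ℝ) ≤ 3 * (s : ℝ) ^ 2 := by exact_mod_cast hub
          nlinarith
        have h5 : (n : ℝ) ^ ((3 : ℝ) / 2) ≤ (4 * (s : ℝ) ^ 2) ^ ((3 : ℝ) / 2) :=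
          Real.rpow_le_rpow (by positivity) h4 (by norm_num)
        have h6 : (4 * (s : ℝ) ^ 2) ^ ((3 : ℝ) / 2) = 8 * (s : ℝ) ^ 3 := by
          have h7 : (4 : ℝ) * (s : ℝ) ^ 2 = ((2 : ℝ) * s) ^ 2 := by ring
          rw [h7]
          rw [← Real.rpow_natCast ((2 : ℝ) * s) 2, ← Real.rpow_mul (by positivity)]
          norm_num
          ring
        linarith
      have hintnn : (0 : ℝ) ≤ ∫ ω, (S n ω - S (s ^ 2) ω) ^ 2 ∂μ :=
        integral_nonneg fun ω => sq_nonneg _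
      have hspos : (0 : ℝ) < (s : ℝ) := by linarith
      have hnum : ∫ ω, (S n ω - S (s ^ 2) ω) ^ 2 ∂μ ≤ K * (2 * (s : ℝ)) :=
        hkey.trans (mul_le_mul_of_nonneg_left hnsub hK0)
      have hstep : (∫ ω, (S n ω - S (s ^ 2) ω) ^ 2 ∂μ) / ((s : ℝ) ^ 2) ^ 2
          ≤ K * (2 * (s : ℝ)) / ((s : ℝ) ^ 2) ^ 2 := by gcongr
      have hstep2 : K * (2 * (s : ℝ)) / ((s : ℝ) ^ 2) ^ 2
          ≤ 16 * K / ((n : ℝ) ^ ((3 : ℝ) / 2)) := by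
        rw [div_le_div_iff₀ (by positivity) hrpow_pos]
        have hKs : (0 : ℝ) ≤ K * (2 * (s : ℝ)) := mul_nonneg hK0 (by positivity)
        have hmul := mul_le_mul_of_nonneg_left hrpow_le hKs
        nlinarith [hmul]
      have hfinal := hstep.trans hstep2
      calc (∫ ω, (S n ω - S (s ^ 2) ω) ^ 2 ∂μ) / ((s : ℝ) ^ 2) ^ 2
          ≤ 16 * K / ((n : ℝ) ^ ((3 : ℝ) / 2)) := hfinal
        _ = 16 * K * (1 / (n : ℝ) ^ ((3 : ℝ) / 2)) := by rw [mul_one_div]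
  -- almost sure convergence of the two auxiliary sequences
  have hg_sum : Summable fun m => ∫ ω, g m ω ∂μ := by
    refine Summable.of_nonneg_of_le (fun m => integral_nonneg fun ω => sq_nonneg _) hg_le ?_
    exact (Real.summable_one_div_nat_pow.mpr one_lt_two).mul_left K
  have hh_sum : Summable fun n => ∫ ω, h n ω ∂μ := by
    refine Summable.of_nonneg_of_le (fun n => integral_nonneg fun ω => sq_nonneg _) hh_le ?_
    exact (Real.summable_one_div_nat_rpow.mpr (by norm_num)).mul_left (16 * K)
  have hg_ae := aux_ae_tendsto_zero μ g (fun m ω => sq_nonneg _) hg_int hg_sum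
  have hh_ae := aux_ae_tendsto_zero μ h (fun n ω => sq_nonneg _) hh_int hh_sum
  have hsqrt_top : Tendsto Nat.sqrt atTop atTop := by
    refine tendsto_atTop_atTop.2 fun b => ⟨b ^ 2, fun n hn => ?_⟩
    have := Nat.sqrt_le_sqrt hn
    rwa [Nat.sqrt_eq'] at this
  filter_upwards [hg_ae, hh_ae] with ω hgω hhω
  -- turn squares into absolute values
  have habs1 : Tendsto (fun m => |S (m ^ 2) ω / ((m ^ 2 : ℕ) : ℝ)|) atTop (𝓝 0) := by
    have h0 : Tendsto (fun m => Real.sqrt (g m ω)) atTop (𝓝 (Real.sqrt 0)) :=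
      (Real.continuous_sqrt.tendsto 0).comp hgω
    rw [Real.sqrt_zero] at h0
    exact h0.congr fun m => by rw [hgdef]; exact Real.sqrt_sq_eq_abs _
  have habs2 : Tendsto
      (fun n => |(S n ω - S ((Nat.sqrt n) ^ 2) ω) / (((Nat.sqrt n) ^ 2 : ℕ) : ℝ)|)
      atTop (𝓝 0) := by
    have h0 : Tendsto (fun n => Real.sqrt (h n ω)) atTop (𝓝 (Real.sqrt 0)) :=
      (Real.continuous_sqrt.tendsto 0).comp hhω
    rw [Real.sqrt_zero] at h0
    exact h0.congr fun n => by rw [hhdef]; exact Real.sqrt_sq_eq_abs _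
  have habs1' : Tendsto (fun n => |S ((Nat.sqrt n) ^ 2) ω / (((Nat.sqrt n) ^ 2 : ℕ) : ℝ)|)
      atTop (𝓝 0) := habs1.comp hsqrt_top
  have hadd : Tendsto (fun n : ℕ =>
      |S ((Nat.sqrt n) ^ 2) ω / (((Nat.sqrt n) ^ 2 : ℕ) : ℝ)|
        + |(S n ω - S ((Nat.sqrt n) ^ 2) ω) / (((Nat.sqrt n) ^ 2 : ℕ) : ℝ)|) atTop (𝓝 0) := by
    have := habs1'.add habs2
    simpa [Function.comp] using this
  refine squeeze_zero_norm' ?_ hadd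
  filter_upwards [eventually_ge_atTop 1] with n hn
  set s : ℕ := Nat.sqrt n with hsdef
  have hs1 : 1 ≤ s := by rw [hsdef]; exact Nat.sqrt_pos.mpr hn
  have hqn : s ^ 2 ≤ n := Nat.sqrt_le' n
  have hq1 : (1 : ℝ) ≤ ((s ^ 2 : ℕ) : ℝ) := by
    have : 1 ≤ s ^ 2 := Nat.one_le_iff_ne_zero.mpr (by positivity)
    exact_mod_cast this
  have hqpos : (0 : ℝ) < ((s ^ 2 : ℕ) : ℝ) := by linarith
  have hqnr : ((s ^ 2 : ℕ) : ℝ) ≤ (n : ℝ) := by exact_mod_cast hqn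
  have hnpos : (0 : ℝ) < (n : ℝ) := by exact_mod_cast hn
  have htri : |S n ω| ≤ |S (s ^ 2) ω| + |S n ω - S (s ^ 2) ω| := by
    have := abs_add_le (S (s ^ 2) ω) (S n ω - S (s ^ 2) ω)
    simpa using this
  rw [Real.norm_eq_abs]
  have hgoal_eq : |(∑ i ∈ Finset.range n, ξ i ω) / (n : ℝ)| = |S n ω| / (n : ℝ) := by
    rw [hS, abs_div, abs_of_pos hnpos]
  rw [hgoal_eq]
  calc |S n ω| / (n : ℝ)
      ≤ (|S (s ^ 2) ω| + |S n ω - S (s ^ 2) ω|) / ((s ^ 2 : ℕ) : ℝ) := by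
        apply div_le_div₀ (by positivity) htri hqpos hqnr
    _ = |S (s ^ 2) ω| / ((s ^ 2 : ℕ) : ℝ) + |S n ω - S (s ^ 2) ω| / ((s ^ 2 : ℕ) : ℝ) :=
        add_div _ _ _
    _ = |S (s ^ 2) ω / ((s ^ 2 : ℕ) : ℝ)| + |(S n ω - S (s ^ 2) ω) / ((s ^ 2 : ℕ) : ℝ)| := by
        rw [abs_div, abs_div, abs_of_pos hqpos]
end

section
/- Let (X_n)_{n≥1} be square-integrable real random variables. For N > 0 define the truncation T^N(x) = max(min(x,N), −N) and remainder R^N(x) = x − T^N(x). Suppose that uniformly in n, (1/n) Σ_{i,j=1}^n Cov[R^N(X_i), R^N(X_j)] → 0 as N → ∞, and that Σ_{i=1}^n (T^N(X_i) − E[T^N(X_i)])/√n converges in distribution to N(0, s_N²) for each N, with s_N² → s² as N → ∞. Then Σ_{i=1}^n (X_i − E[X_i])/√n converges in distribution to N(0, s²). -/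
open MeasureTheory ProbabilityTheory Filter
open scoped ENNReal NNReal Topology BigOperators

lemma aux_integrable_mul {Ω : Type*} [MeasurableSpace Ω] {μ : Measure Ω} {f g : Ω → ℝ}
    (hf : MemLp f 2 μ) (hg : MemLp g 2 μ) : Integrable (fun ω => f ω * g ω) μ := by
  refine Integrable.mono' ((hf.integrable_sq.add hg.integrable_sq).div_const 2)
    (hf.1.mul hg.1) (Filter.Eventually.of_forall fun ω => ?_)
  rw [Real.norm_eq_abs, abs_mul]
  simp only [Pi.add_apply]
  nlinarith [sq_nonneg (|f ω| - |g ω|), sq_abs (f ω), sq_abs (g ω), abs_nonneg (f ω), abs_nonneg (g ω)]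

lemma aux_cheb {Ω : Type*} [MeasurableSpace Ω] (μ : Measure Ω) [IsProbabilityMeasure μ]
    {d : Ω → ℝ} (hd : MemLp d 2 μ) {δ : ℝ} (hδ : 0 < δ)
    (h : ∫ ω, d ω ^ 2 ∂μ ≤ δ ^ 3) : μ {ω | δ ≤ |d ω|} ≤ ENNReal.ofReal δ := by
  have markov := mul_meas_ge_le_integral_of_nonneg
    (Filter.Eventually.of_forall fun ω => sq_nonneg (d ω)) hd.integrable_sq (δ ^ 2)
  have sub : {ω | δ ≤ |d ω|} ⊆ {ω | δ ^ 2 ≤ d ω ^ 2} := by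
    intro ω hω
    have : δ ^ 2 ≤ |d ω| ^ 2 := pow_le_pow_left₀ hδ.le hω 2
    simpa [sq_abs] using this
  have h1 : μ {ω | δ ≤ |d ω|} ≤ μ {ω | δ ^ 2 ≤ d ω ^ 2} := measure_mono sub
  have hfin : μ {ω | δ ^ 2 ≤ d ω ^ 2} ≠ ∞ := measure_ne_top _ _
  have h2 : (μ {ω | δ ^ 2 ≤ d ω ^ 2}).toReal ≤ δ := by
    have hpos : (0:ℝ) < δ ^ 2 := by positivity
    rw [measureReal_def] at markov
    nlinarith [markov, h, ENNReal.toReal_nonneg (a := μ {ω | δ ^ 2 ≤ d ω ^ 2})]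
  calc μ {ω | δ ≤ |d ω|} ≤ μ {ω | δ ^ 2 ≤ d ω ^ 2} := h1
    _ = ENNReal.ofReal (μ {ω | δ ^ 2 ≤ d ω ^ 2}).toReal := (ENNReal.ofReal_toReal hfin).symm
    _ ≤ ENNReal.ofReal δ := ENNReal.ofReal_le_ofReal h2

lemma aux_lp_coupling {Ω : Type*} [MeasurableSpace Ω] (μ : Measure Ω) [IsProbabilityMeasure μ]
    {g t : Ω → ℝ} (hg : AEMeasurable g μ) (ht : AEMeasurable t μ) {δ : ℝ} (hδ : 0 < δ)
    (h : μ {ω | δ ≤ |g ω - t ω|} ≤ ENNReal.ofReal δ) :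
    levyProkhorovEDist (μ.map g) (μ.map t) ≤ ENNReal.ofReal δ := by
  apply levyProkhorovEDist_le_of_forall
  intro ε B hε hεtop hB
  have hδε : δ < ε.toReal := by
    have := (ENNReal.toReal_lt_toReal ENNReal.ofReal_ne_top hεtop.ne).mpr hε
    rwa [ENNReal.toReal_ofReal hδ.le] at this
  have key : ∀ a b : Ω → ℝ, AEMeasurable a μ → AEMeasurable b μ →
      μ {ω | δ ≤ |a ω - b ω|} ≤ ENNReal.ofReal δ →
      μ.map a B ≤ μ.map b (Metric.thickening ε.toReal B) + ε := by
    intro a b ha hb hab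
    rw [Measure.map_apply_of_aemeasurable ha hB,
      Measure.map_apply_of_aemeasurable hb Metric.isOpen_thickening.measurableSet]
    have incl : a ⁻¹' B ⊆ b ⁻¹' (Metric.thickening ε.toReal B) ∪ {ω | δ ≤ |a ω - b ω|} := by
      intro ω hω
      by_cases hc : δ ≤ |a ω - b ω|
      · exact Or.inr hc
      · push_neg at hc
        refine Or.inl (Metric.mem_thickening_iff.mpr ⟨a ω, hω, ?_⟩)
        rw [Real.dist_eq, abs_sub_comm]
        exact hc.trans hδε
    calc μ (a ⁻¹' B) ≤ μ (b ⁻¹' (Metric.thickening ε.toReal B) ∪ {ω | δ ≤ |a ω - b ω|}) :=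
          measure_mono incl
      _ ≤ μ (b ⁻¹' (Metric.thickening ε.toReal B)) + μ {ω | δ ≤ |a ω - b ω|} :=
          measure_union_le _ _
      _ ≤ μ (b ⁻¹' (Metric.thickening ε.toReal B)) + ε :=
          add_le_add le_rfl (hab.trans hε.le)
  refine ⟨key g t hg ht h, key t g ht hg ?_⟩
  simpa [abs_sub_comm] using h

lemma aux_gauss_tendsto {sSq : ℝ → ℝ≥0} {sSqLim : ℝ≥0}
    (hs : Tendsto (fun N : ℝ => sSq N) atTop (𝓝 sSqLim))
    (f : BoundedContinuousFunction ℝ ℝ) :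
    Tendsto (fun N : ℝ => ∫ x, f x ∂(gaussianReal 0 (sSq N))) atTop
      (𝓝 (∫ x, f x ∂(gaussianReal 0 sSqLim))) := by
  have hrep0 : ∀ v : ℝ≥0, gaussianReal 0 v = (gaussianReal 0 1).map (((NNReal.sqrt v : ℝ)) * ·) := by
    intro v
    rw [gaussianReal_map_const_mul]
    congr 1
    · simp
    · ext
      simp [NNReal.sq_sqrt]
  have hrep : ∀ v : ℝ≥0, ∫ x, f x ∂(gaussianReal 0 v)
      = ∫ x, f ((NNReal.sqrt v : ℝ) * x) ∂(gaussianReal 0 1) := by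
    intro v
    rw [hrep0 v]
    exact integral_map (measurable_const_mul _).aemeasurable f.continuous.aestronglyMeasurable
  simp_rw [hrep]
  have hc : Tendsto (fun N : ℝ => ((NNReal.sqrt (sSq N) : ℝ))) atTop
      (𝓝 ((NNReal.sqrt sSqLim : ℝ))) :=
    ((NNReal.continuous_coe.comp NNReal.continuous_sqrt).tendsto _).comp hs
  refine tendsto_integral_filter_of_dominated_convergence (fun _ => ‖f‖) ?_ ?_
      (integrable_const _) ?_
  · exact Filter.Eventually.of_forall fun N =>
      (f.continuous.comp (continuous_const.mul continuous_id)).aestronglyMeasurable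
  · exact Filter.Eventually.of_forall fun N =>
      Filter.Eventually.of_forall fun x => f.norm_coe_le_norm _
  · exact Filter.Eventually.of_forall fun x => (f.continuous.tendsto _).comp (hc.mul_const x)

lemma aux_main {Ω : Type*} [MeasurableSpace Ω] (μ : Measure Ω) [IsProbabilityMeasure μ]
    (g : ℕ → Ω → ℝ) (t d : ℝ → ℕ → Ω → ℝ)
    (hgm : ∀ n, AEMeasurable (g n) μ)
    (htm : ∀ N n, AEMeasurable (t N n) μ)
    (hdmem : ∀ N n, MemLp (d N n) 2 μ)
    (hgt : ∀ N n ω, g n ω - t N n ω = d N n ω)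
    (sSq : ℝ → ℝ≥0) (sSqLim : ℝ≥0)
    (hs : Tendsto (fun N : ℝ => sSq N) atTop (𝓝 sSqLim))
    (hd2 : ∀ ε : ℝ, 0 < ε → ∃ N₀ : ℝ, ∀ N : ℝ, N₀ ≤ N → ∀ n : ℕ, 1 ≤ n →
      ∫ ω, d N n ω ^ 2 ∂μ ≤ ε)
    (hTclt : ∀ N : ℝ, ∀ f : BoundedContinuousFunction ℝ ℝ,
      Tendsto (fun n : ℕ => ∫ ω, f (t N n ω) ∂μ) atTop
        (𝓝 (∫ x, f x ∂(gaussianReal 0 (sSq N))))) :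
    ∀ f : BoundedContinuousFunction ℝ ℝ,
      Tendsto (fun n : ℕ => ∫ ω, f (g n ω) ∂μ) atTop
        (𝓝 (∫ x, f x ∂(gaussianReal 0 sSqLim))) := by
  let P : ℕ → ProbabilityMeasure ℝ := fun n => ⟨μ.map (g n), Measure.isProbabilityMeasure_map (hgm n)⟩
  let Q : ℝ → ℕ → ProbabilityMeasure ℝ := fun N n =>
    ⟨μ.map (t N n), Measure.isProbabilityMeasure_map (htm N n)⟩
  let G : ℝ → ProbabilityMeasure ℝ := fun N => ⟨gaussianReal 0 (sSq N), inferInstance⟩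
  let Glim : ProbabilityMeasure ℝ := ⟨gaussianReal 0 sSqLim, inferInstance⟩
  suffices hconv : Tendsto P atTop (𝓝 Glim) by
    intro f
    have h2 := ProbabilityMeasure.tendsto_iff_forall_integral_tendsto.mp hconv f
    exact h2.congr fun n => integral_map (hgm n) f.continuous.aestronglyMeasurable
  have hQ : ∀ N, Tendsto (fun n => Q N n) atTop (𝓝 (G N)) := by
    intro N
    rw [ProbabilityMeasure.tendsto_iff_forall_integral_tendsto]
    intro f
    exact (hTclt N f).congr fun n =>
      (integral_map (htm N n) f.continuous.aestronglyMeasurable).symm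
  have hGt : Tendsto G atTop (𝓝 Glim) := by
    rw [ProbabilityMeasure.tendsto_iff_forall_integral_tendsto]
    intro f
    exact aux_gauss_tendsto hs f
  let e := LevyProkhorov.probabilityMeasureHomeomorph (Ω := ℝ)
  rw [e.isEmbedding.tendsto_nhds_iff]
  rw [Metric.tendsto_atTop]
  intro ε hε
  have hδ : 0 < ε / 4 := by positivity
  have hGt' : Tendsto (fun N => e (G N)) atTop (𝓝 (e Glim)) := (e.continuous.tendsto _).comp hGt
  obtain ⟨N₁, hN₁⟩ := Metric.tendsto_atTop.mp hGt' (ε / 4) hδ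
  obtain ⟨N₀, hN₀⟩ := hd2 ((ε / 4) ^ 3) (by positivity)
  set N := max N₀ N₁ with hNdef
  have hQ' : Tendsto (fun n => e (Q N n)) atTop (𝓝 (e (G N))) :=
    (e.continuous.tendsto _).comp (hQ N)
  obtain ⟨M, hM⟩ := Metric.tendsto_atTop.mp hQ' (ε / 4) hδ
  refine ⟨max M 1, fun n hn => ?_⟩
  have hn1 : 1 ≤ n := le_trans (le_max_right _ _) hn
  have hnM : M ≤ n := le_trans (le_max_left _ _) hn
  have hbound : μ {ω | ε / 4 ≤ |g n ω - t N n ω|} ≤ ENNReal.ofReal (ε / 4) := by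
    have hset : {ω | ε / 4 ≤ |g n ω - t N n ω|} = {ω | ε / 4 ≤ |d N n ω|} := by
      ext ω; rw [Set.mem_setOf_eq, Set.mem_setOf_eq, hgt]
    rw [hset]
    exact aux_cheb μ (hdmem N n) hδ (hN₀ N (le_max_left _ _) n hn1)
  have dPQ : dist (e ((fun n => P n) n)) (e (Q N n)) ≤ ε / 4 := by
    rw [LevyProkhorov.dist_probabilityMeasure_def]
    refine ENNReal.toReal_le_of_le_ofReal hδ.le ?_
    exact aux_lp_coupling μ (hgm n) (htm N n) hδ hbound
  have dQG : dist (e (Q N n)) (e (G N)) < ε / 4 := hM n hnM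
  have dGG : dist (e (G N)) (e Glim) < ε / 4 := hN₁ N (le_max_right _ _)
  have tri := dist_triangle4 (e ((fun n => P n) n)) (e (Q N n)) (e (G N)) (e Glim)
  calc dist ((fun n => e (P n)) n) (e Glim)
      = dist (e ((fun n => P n) n)) (e Glim) := rfl
    _ ≤ _ := tri
    _ < ε := by linarith

/-- Truncation argument for the CLT: if the covariance contribution of the remainders
`R^N(X_i)` vanishes as `N → ∞` uniformly in `n`, and the normalized sums of the
truncated centered variables converge in distribution to `N(0, s_N²)` with
`s_N² → s²`, then the normalized sums of the centered `X_i` converge in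
distribution to `N(0, s²)`. -/
theorem stmt_10 {Ω : Type*} [MeasurableSpace Ω] (μ : Measure Ω) [IsProbabilityMeasure μ]
    (X : ℕ → Ω → ℝ) (hX : ∀ i, MemLp (X i) 2 μ)
    (T R : ℝ → ℝ → ℝ)
    (hT : ∀ N x, T N x = max (min x N) (-N))
    (hR : ∀ N x, R N x = x - T N x)
    (sSq : ℝ → ℝ≥0) (sSqLim : ℝ≥0)
    (hs : Tendsto (fun N : ℝ => sSq N) atTop (𝓝 sSqLim))
    (hcovR : ∀ ε : ℝ, 0 < ε → ∃ N₀ : ℝ, ∀ N : ℝ, N₀ ≤ N → ∀ n : ℕ, 1 ≤ n →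
      |(1 / (n : ℝ)) * ∑ i ∈ Finset.range n, ∑ j ∈ Finset.range n,
          ∫ ω, (R N (X i ω) - ∫ ω', R N (X i ω') ∂μ) *
            (R N (X j ω) - ∫ ω', R N (X j ω') ∂μ) ∂μ| ≤ ε)
    (hTclt : ∀ N : ℝ, ∀ f : BoundedContinuousFunction ℝ ℝ,
      Tendsto (fun n : ℕ => ∫ ω,
          f ((∑ i ∈ Finset.range n, (T N (X i ω) - ∫ ω', T N (X i ω') ∂μ)) /
            Real.sqrt n) ∂μ)
        atTop (𝓝 (∫ x, f x ∂(gaussianReal 0 (sSq N))))) :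
    ∀ f : BoundedContinuousFunction ℝ ℝ,
      Tendsto (fun n : ℕ => ∫ ω,
          f ((∑ i ∈ Finset.range n, (X i ω - ∫ ω', X i ω' ∂μ)) / Real.sqrt n) ∂μ)
        atTop (𝓝 (∫ x, f x ∂(gaussianReal 0 sSqLim))) := by
  have hTcont : ∀ N : ℝ, Continuous (T N) := by
    intro N
    have hfe : T N = fun x => max (min x N) (-N) := funext (hT N)
    rw [hfe]
    exact (continuous_id.min continuous_const).max continuous_const
  have hXae : ∀ i, AEMeasurable (X i) μ := fun i => (hX i).1.aemeasurable
  have hTmem : ∀ (N : ℝ) (i : ℕ), MemLp (fun ω => T N (X i ω)) 2 μ := by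
    intro N i
    refine MemLp.of_le ((hX i).norm.add (memLp_const |N|))
      ((hTcont N).comp_aestronglyMeasurable (hX i).1)
      (Filter.Eventually.of_forall fun ω => ?_)
    have h1 : |T N (X i ω)| ≤ |X i ω| + |N| := by
      rw [hT]
      rcases max_cases (min (X i ω) N) (-N) with ⟨he, _⟩ | ⟨he, _⟩ <;> rw [he]
      · rcases min_cases (X i ω) N with ⟨hm, _⟩ | ⟨hm, _⟩ <;> rw [hm]
        · exact le_add_of_nonneg_right (abs_nonneg _)
        · exact le_add_of_nonneg_left (abs_nonneg _)
      · rw [abs_neg]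
        exact le_add_of_nonneg_left (abs_nonneg _)
    simp only [Pi.add_apply, Real.norm_eq_abs]
    rw [abs_of_nonneg (by positivity : (0:ℝ) ≤ |X i ω| + |N|)]
    exact h1
  have hRmem : ∀ (N : ℝ) (i : ℕ), MemLp (fun ω => R N (X i ω)) 2 μ := by
    intro N i
    have hfe : (fun ω => R N (X i ω)) = fun ω => X i ω - T N (X i ω) := funext fun ω => hR N _
    rw [hfe]
    exact (hX i).sub (hTmem N i)
  have hRcmem : ∀ (N : ℝ) (i : ℕ),
      MemLp (fun ω => R N (X i ω) - ∫ ω', R N (X i ω') ∂μ) 2 μ :=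
    fun N i => (hRmem N i).sub (memLp_const _)
  have hint : ∀ (N : ℝ) (i : ℕ),
      ∫ ω', R N (X i ω') ∂μ = (∫ ω', X i ω' ∂μ) - ∫ ω', T N (X i ω') ∂μ := by
    intro N i
    have hfe : (fun ω' => R N (X i ω')) = fun ω' => X i ω' - T N (X i ω') := funext fun ω' => hR N _
    rw [hfe, integral_sub ((hX i).integrable one_le_two) ((hTmem N i).integrable one_le_two)]
  refine aux_main μ
    (fun n ω => (∑ i ∈ Finset.range n, (X i ω - ∫ ω', X i ω' ∂μ)) / Real.sqrt n)
    (fun N n ω => (∑ i ∈ Finset.range n, (T N (X i ω) - ∫ ω', T N (X i ω') ∂μ)) / Real.sqrt n)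
    (fun N n ω => (∑ i ∈ Finset.range n, (R N (X i ω) - ∫ ω', R N (X i ω') ∂μ)) / Real.sqrt n)
    ?_ ?_ ?_ ?_ sSq sSqLim hs ?_ hTclt
  · intro n
    exact (Finset.aemeasurable_fun_sum _ fun i _ => (hXae i).sub aemeasurable_const).div_const _
  · intro N n
    exact (Finset.aemeasurable_fun_sum _ fun i _ =>
      (((hTcont N).measurable.comp_aemeasurable (hXae i)).sub aemeasurable_const)).div_const _
  · intro N n
    have hsum : MemLp
        (fun ω => ∑ i ∈ Finset.range n, (R N (X i ω) - ∫ ω', R N (X i ω') ∂μ)) 2 μ :=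
      memLp_finset_sum _ fun i _ => hRcmem N i
    have h3 := hsum.const_mul (Real.sqrt n)⁻¹
    simpa [div_eq_inv_mul] using h3
  · intro N n ω
    rw [div_sub_div_same, ← Finset.sum_sub_distrib]
    congr 1
    refine Finset.sum_congr rfl fun i _ => ?_
    rw [hR N (X i ω), hint N i]
    ring
  · intro ε hε
    obtain ⟨N₀, hN₀⟩ := hcovR ε hε
    refine ⟨N₀, fun N hN n hn => ?_⟩
    have expand : ∫ ω, (∑ i ∈ Finset.range n, (R N (X i ω) - ∫ ω', R N (X i ω') ∂μ)) ^ 2 ∂μ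
        = ∑ i ∈ Finset.range n, ∑ j ∈ Finset.range n,
            ∫ ω, (R N (X i ω) - ∫ ω', R N (X i ω') ∂μ) *
              (R N (X j ω) - ∫ ω', R N (X j ω') ∂μ) ∂μ := by
      have hsq2 : ∀ ω : Ω, (∑ i ∈ Finset.range n, (R N (X i ω) - ∫ ω', R N (X i ω') ∂μ)) ^ 2
          = ∑ i ∈ Finset.range n, ∑ j ∈ Finset.range n,
              (R N (X i ω) - ∫ ω', R N (X i ω') ∂μ) *
                (R N (X j ω) - ∫ ω', R N (X j ω') ∂μ) := by
        intro ω
        rw [sq, Finset.sum_mul_sum]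
      simp_rw [hsq2]
      rw [integral_finset_sum _ fun i _ => integrable_finset_sum _ fun j _ =>
        aux_integrable_mul (hRcmem N i) (hRcmem N j)]
      exact Finset.sum_congr rfl fun i _ =>
        integral_finset_sum _ fun j _ => aux_integrable_mul (hRcmem N i) (hRcmem N j)
    have hdn : ∀ ω : Ω,
        ((∑ i ∈ Finset.range n, (R N (X i ω) - ∫ ω', R N (X i ω') ∂μ)) / Real.sqrt n) ^ 2
        = (1 / (n : ℝ)) *
            (∑ i ∈ Finset.range n, (R N (X i ω) - ∫ ω', R N (X i ω') ∂μ)) ^ 2 := by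
      intro ω
      rw [div_pow, Real.sq_sqrt (Nat.cast_nonneg n)]
      ring
    calc ∫ ω, ((∑ i ∈ Finset.range n, (R N (X i ω) - ∫ ω', R N (X i ω') ∂μ)) / Real.sqrt n) ^ 2 ∂μ
        = (1 / (n : ℝ)) * ∑ i ∈ Finset.range n, ∑ j ∈ Finset.range n,
            ∫ ω, (R N (X i ω) - ∫ ω', R N (X i ω') ∂μ) *
              (R N (X j ω) - ∫ ω', R N (X j ω') ∂μ) ∂μ := by
          simp_rw [hdn]
          rw [integral_const_mul, expand]
      _ ≤ |(1 / (n : ℝ)) * ∑ i ∈ Finset.range n, ∑ j ∈ Finset.range n,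
            ∫ ω, (R N (X i ω) - ∫ ω', R N (X i ω') ∂μ) *
              (R N (X j ω) - ∫ ω', R N (X j ω') ∂μ) ∂μ| := le_abs_self _
      _ ≤ ε := hN₀ N hN n hn
end
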